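/- arXiv:1705.08426 — 5 statements merged into one kernel-verified Lean document; each statement's English description precedes it below -/
import Mathlib

section
/- If s ∈ W, then there exists a strategy g that is winning from s. -/
/-- The set `W` of winning states of the DFA game with transition function
`δ : S × 2^(X∪Y) → S` (a letter `X' ∪ Y'` with `X' ⊆ X`, `Y' ⊆ Y` is represented
by the pair of its two disjoint parts) and accepting states `F`: the least set
containing `F` and containing every state `s` for which there exists `Y' ⊆ Y`
such that `δ(s, X' ∪ Y') ∈ W` for every `X' ⊆ X`. -/
inductive Win {S X Y : Type} (δ : S → Set X → Set Y → S) (F : Set S) : S → Prop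
  | accept : ∀ s ∈ F, Win δ F s
  | step : ∀ (s : S) (Y' : Set Y), (∀ X' : Set X, Win δ F (δ s X' Y')) → Win δ F s

/-- The induced run of a strategy `g : (2^X)* → 2^Y` from state `s` on an
infinite input sequence `xs`:
`s'₀ = s`, `s'_{j+1} = δ(s'_j, X_j ∪ g(X₀,…,X_{j−1}))`. -/
def run {S X Y : Type} (δ : S → Set X → Set Y → S) (g : List (Set X) → Set Y)
    (s : S) (xs : ℕ → Set X) : ℕ → S
  | 0 => s
  | j + 1 => δ (run δ g s xs j) (xs j) (g (List.ofFn fun m : Fin j => xs m))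


open Classical


/-- Rank-indexed winning predicate: `WinN n s` means `s` can be won in at most `n` steps. -/
def WinN {S X Y : Type} (δ : S → Set X → Set Y → S) (F : Set S) : ℕ → S → Prop
  | 0, s => s ∈ F
  | n + 1, s => s ∈ F ∨ ∃ Y' : Set Y, ∀ X' : Set X, WinN δ F n (δ s X' Y')

lemma winN_succ {S X Y : Type} (δ : S → Set X → Set Y → S) (F : Set S) :
    ∀ n s, WinN δ F n s → WinN δ F (n + 1) s := by
  intro n
  induction n with
  | zero => intro s h; exact Or.inl h
  | succ n ih =>
    intro s h
    rcases h with h | ⟨Y', hY⟩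
    · exact Or.inl h
    · exact Or.inr ⟨Y', fun X' => ih _ (hY X')⟩

lemma winN_mono {S X Y : Type} (δ : S → Set X → Set Y → S) (F : Set S)
    {n m : ℕ} (hnm : n ≤ m) {s : S} (h : WinN δ F n s) : WinN δ F m s := by
  induction m, hnm using Nat.le_induction with
  | base => exact h
  | succ m _ ih => exact winN_succ δ F m s ih

lemma winN_of_win {S X Y : Type} [Finite X] (δ : S → Set X → Set Y → S) (F : Set S)
    {s : S} (h : Win δ F s) : ∃ n, WinN δ F n s := by
  induction h with
  | accept s hs => exact ⟨0, hs⟩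
  | step s Y' h ih =>
    choose f hf using ih
    obtain ⟨a, ha⟩ := Finite.exists_max f
    exact ⟨f a + 1, Or.inr ⟨Y', fun X' => winN_mono δ F (ha X') (hf X')⟩⟩

lemma win_of_winN {S X Y : Type} (δ : S → Set X → Set Y → S) (F : Set S) :
    ∀ n s, WinN δ F n s → Win δ F s := by
  intro n
  induction n with
  | zero => intro s h; exact Win.accept s h
  | succ n ih =>
    intro s h
    rcases h with h | ⟨Y', hY⟩
    · exact Win.accept s h
    · exact Win.step s Y' fun X' => ih _ (hY X')

/-- The rank of a state: the least `n` with `WinN n s`. -/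
noncomputable def rank {S X Y : Type} (δ : S → Set X → Set Y → S) (F : Set S) (s : S) : ℕ :=
  sInf {n | WinN δ F n s}

/-- The chosen move of the strategy at a state. -/
noncomputable def move {S X Y : Type} (δ : S → Set X → Set Y → S) (F : Set S) (s : S) :
    Set Y :=
  if h : ∃ Y' : Set Y, ∀ X' : Set X,
      ∃ m, m < rank δ F s ∧ WinN δ F m (δ s X' Y') then h.choose else ∅

lemma move_spec {S X Y : Type} [Finite X] (δ : S → Set X → Set Y → S) (F : Set S)
    {s : S} (hW : Win δ F s) (hF : s ∉ F) :
    ∀ X' : Set X, ∃ m, m < rank δ F s ∧ WinN δ F m (δ s X' (move δ F s)) := by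
  have hne : {n | WinN δ F n s}.Nonempty := winN_of_win δ F hW
  have hmem : WinN δ F (rank δ F s) s := Nat.sInf_mem hne
  have hr : rank δ F s ≠ 0 := by
    intro h0
    rw [h0] at hmem
    exact hF hmem
  obtain ⟨n, hn⟩ := Nat.exists_eq_succ_of_ne_zero hr
  rw [hn] at hmem
  rcases hmem with h | ⟨Y', hY⟩
  · exact absurd h hF
  have h : ∃ Y' : Set Y, ∀ X' : Set X,
      ∃ m, m < rank δ F s ∧ WinN δ F m (δ s X' Y') :=
    ⟨Y', fun X' => ⟨n, by omega, hY X'⟩⟩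
  rw [move, dif_pos h]
  exact h.choose_spec

/-- The run induced by the fixed `move` function from state `s`. -/
noncomputable def runState {S X Y : Type} (δ : S → Set X → Set Y → S) (F : Set S)
    (s : S) (xs : ℕ → Set X) : ℕ → S
  | 0 => s
  | j + 1 => δ (runState δ F s xs j) (xs j) (move δ F (runState δ F s xs j))

lemma runState_shift {S X Y : Type} (δ : S → Set X → Set Y → S) (F : Set S)
    (s : S) (xs : ℕ → Set X) :
    ∀ k, runState δ F s xs (k + 1) =
      runState δ F (δ s (xs 0) (move δ F s)) (fun i => xs (i + 1)) k := by
  intro k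
  induction k with
  | zero => rfl
  | succ k ih =>
    conv_lhs => rw [runState]
    rw [ih]
    rfl

lemma runState_reaches {S X Y : Type} [Finite X] (δ : S → Set X → Set Y → S) (F : Set S) :
    ∀ (N : ℕ) (s : S), Win δ F s → rank δ F s < N →
      ∀ xs : ℕ → Set X, ∃ k, runState δ F s xs k ∈ F := by
  intro N
  induction N with
  | zero => intro s _ h; omega
  | succ N ih =>
    intro s hW hrank xs
    by_cases hF : s ∈ F
    · exact ⟨0, hF⟩
    · obtain ⟨m, hm, hWinN⟩ := move_spec δ F hW hF (xs 0)
      set t := δ s (xs 0) (move δ F s) with ht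
      have hWt : Win δ F t := win_of_winN δ F m t hWinN
      have hrt : rank δ F t < N := by
        have : rank δ F t ≤ m := Nat.sInf_le hWinN
        omega
      obtain ⟨k, hk⟩ := ih t hWt hrt (fun i => xs (i + 1))
      exact ⟨k + 1, by rw [runState_shift]; exact hk⟩

/-- If `s ∈ W`, then there exists a strategy `g` that is winning from `s`:
for every infinite sequence of inputs, the induced run of `g` from `s`
reaches an accepting state. -/
theorem winning_state_has_winning_strategy {S X Y : Type}
    [Fintype S] [Fintype X] [Fintype Y]
    (δ : S → Set X → Set Y → S) (s₀ : S) (F : Set S) (s : S)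
    (hW : Win δ F s) :
    ∃ g : List (Set X) → Set Y,
      ∀ xs : ℕ → Set X, ∃ k : ℕ, run δ g s xs k ∈ F := by
  classical
  refine ⟨fun l => move δ F (l.foldl (fun t x => δ t x (move δ F t)) s), ?_⟩
  intro xs
  have key : ∀ j : ℕ,
      (List.ofFn fun m : Fin j => xs m).foldl (fun t x => δ t x (move δ F t)) s
        = runState δ F s xs j := by
    intro j
    induction j with
    | zero => rfl
    | succ j ih =>
      rw [List.ofFn_succ']
      simp only [List.concat_eq_append, List.foldl_append, List.foldl_cons, List.foldl_nil,
        Fin.coe_castSucc, ih, Fin.val_last]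
      rfl
  have hrun : ∀ j, run δ (fun l => move δ F (l.foldl (fun t x => δ t x (move δ F t)) s)) s xs j
      = runState δ F s xs j := by
    intro j
    induction j with
    | zero => rfl
    | succ j ih => rw [run, ih, key]; rfl
  obtain ⟨k, hk⟩ := runState_reaches δ F (rank δ F s + 1) s hW (by omega) xs
  exact ⟨k, by rw [hrun]; exact hk⟩
end

section
/- If there exists a strategy g that is winning from a state s, then s ∈ W. -/
/-- If there exists a strategy `g` that is winning from a state `s`, then
`s ∈ W`. -/
theorem winning_strategy_implies_winning_state {S X Y : Type}
    [Fintype S] [Fintype X] [Fintype Y]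
    (δ : S → Set X → Set Y → S) (s₀ : S) (F : Set S) (s : S)
    (g : List (Set X) → Set Y)
    (hg : ∀ xs : ℕ → Set X, ∃ k : ℕ, run δ g s xs k ∈ F) :
    Win δ F s := by
  by_contra hs
  have key : ∀ t : S, ¬ Win δ F t → ∀ Y' : Set Y,
      ∃ X' : Set X, ¬ Win δ F (δ t X' Y') := by
    intro t ht Y'
    by_contra h
    push_neg at h
    exact ht (Win.step t Y' h)
  obtain ⟨f, hf⟩ : ∃ f : S → Set Y → Set X, ∀ t, ¬ Win δ F t → ∀ Y',
      ¬ Win δ F (δ t (f t Y') Y') := by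
    classical
    refine ⟨fun t Y' => if h : Win δ F t then ∅ else Classical.choose (key t h Y'), ?_⟩
    intro t ht Y'
    simp only [dif_neg ht]
    exact Classical.choose_spec (key t ht Y')
  -- adversarial run: p n = (state after n steps, input list so far)
  set p : ℕ → S × List (Set X) := fun n => Nat.rec (s, [])
    (fun _ q => (δ q.1 (f q.1 (g q.2)) (g q.2), q.2 ++ [f q.1 (g q.2)])) n with hp
  set xs : ℕ → Set X := fun n => f (p n).1 (g (p n).2) with hxs
  have hp0 : p 0 = (s, []) := rfl
  have hpsucc : ∀ n, p (n + 1) = (δ (p n).1 (xs n) (g (p n).2), (p n).2 ++ [xs n]) := by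
    intro n; rfl
  have hlist : ∀ n, (p n).2 = List.ofFn (fun m : Fin n => xs m) := by
    intro n
    induction n with
    | zero => rfl
    | succ n ih =>
      rw [hpsucc, List.ofFn_succ']
      simp only [List.concat_eq_append, ih]
      rfl
  have hrun : ∀ n, run δ g s xs n = (p n).1 := by
    intro n
    induction n with
    | zero => rfl
    | succ n ih =>
      rw [run, ih, hpsucc, ← hlist]
  have hnotwin : ∀ n, ¬ Win δ F (p n).1 := by
    intro n
    induction n with
    | zero => exact hs
    | succ n ih =>
      rw [hpsucc]
      exact hf _ ih _
  obtain ⟨k, hk⟩ := hg xs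
  rw [hrun] at hk
  exact hnotwin k (Win.accept _ hk)
end

section
/- If s ∈ W, then there exists a strategy g such that for every infinite sequence X₀, X₁, … of subsets of X there exists k with 0 ≤ k ≤ |S| such that the state s'_k of the induced run of g from s belongs to F; that is, the controller can force acceptance within at most |S| steps. -/
open Classical

namespace WinAux

variable {S X Y : Type}

def Wn (δ : S → Set X → Set Y → S) (F : Set S) : ℕ → Set S
  | 0 => F
  | n + 1 => Wn δ F n ∪ {s | ∃ Y', ∀ X', δ s X' Y' ∈ Wn δ F n}

lemma Wn_succ (δ : S → Set X → Set Y → S) (F : Set S) (n : ℕ) :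
    Wn δ F n ⊆ Wn δ F (n + 1) := Set.subset_union_left

lemma Wn_mono (δ : S → Set X → Set Y → S) (F : Set S) {m n : ℕ} (h : m ≤ n) :
    Wn δ F m ⊆ Wn δ F n := by
  induction n, h using Nat.le_induction with
  | base => exact subset_rfl
  | succ n _ ih => exact ih.trans (Wn_succ δ F n)

lemma win_mem_Wn [Fintype X] {δ : S → Set X → Set Y → S} {F : Set S} {s : S}
    (hW : Win δ F s) : ∃ n, s ∈ Wn δ F n := by
  induction hW with
  | accept s hs => exact ⟨0, hs⟩
  | step s Y' h ih =>
    choose f hf using ih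
    refine ⟨Finset.univ.sup f + 1, Or.inr ⟨Y', fun X' => ?_⟩⟩
    exact Wn_mono δ F (Finset.le_sup (Finset.mem_univ X')) (hf X')

lemma Wn_stab {δ : S → Set X → Set Y → S} {F : Set S} {k : ℕ}
    (h : Wn δ F (k + 1) = Wn δ F k) : ∀ m, Wn δ F (k + m) = Wn δ F k := by
  intro m
  induction m with
  | zero => rfl
  | succ m ih =>
    rw [show k + (m + 1) = (k + m) + 1 by omega]
    show Wn δ F (k + m) ∪ {s | ∃ Y', ∀ X', δ s X' Y' ∈ Wn δ F (k + m)} = Wn δ F k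
    rw [ih]
    exact h

lemma Wn_eq_or_card [Fintype S] {δ : S → Set X → Set Y → S} {F : Set S} :
    ∀ k : ℕ, Wn δ F (k + 1) = Wn δ F k ∨ k + 1 ≤ (Wn δ F (k + 1)).ncard := by
  intro k
  induction k with
  | zero =>
    by_cases h : Wn δ F 1 = Wn δ F 0
    · exact Or.inl h
    · refine Or.inr ?_
      have hs : Wn δ F 0 ⊂ Wn δ F 1 := ⟨Wn_succ δ F 0, fun hsub => h (le_antisymm hsub (Wn_succ δ F 0))⟩
      have := Set.ncard_lt_ncard hs (Set.toFinite _)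
      show 1 ≤ (Wn δ F 1).ncard
      omega
  | succ k ih =>
    by_cases h : Wn δ F (k + 2) = Wn δ F (k + 1)
    · exact Or.inl h
    · refine Or.inr ?_
      have hs : Wn δ F (k + 1) ⊂ Wn δ F (k + 2) :=
        ⟨Wn_succ δ F (k + 1), fun hsub => h (le_antisymm hsub (Wn_succ δ F (k + 1)))⟩
      have h2 := Set.ncard_lt_ncard hs (Set.toFinite _)
      rcases ih with h1 | h1
      · exact absurd ((Wn_stab h1 2).trans h1.symm) h
      · show k + 2 ≤ (Wn δ F (k + 2)).ncard
        omega

lemma Wn_subset_card [Fintype S] {δ : S → Set X → Set Y → S} {F : Set S} (n : ℕ) :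
    Wn δ F n ⊆ Wn δ F (Fintype.card S) := by
  set N := Fintype.card S with hN
  rcases Wn_eq_or_card (δ := δ) (F := F) N with h | h
  · rcases le_or_gt n N with h' | h'
    · exact Wn_mono δ F h'
    · have : Wn δ F (N + (n - N)) = Wn δ F N := Wn_stab h (n - N)
      rw [show N + (n - N) = n by omega] at this
      exact this.le
  · exfalso
    have : (Wn δ F (N + 1)).ncard ≤ N := by
      have := Set.ncard_le_ncard (Set.subset_univ (Wn δ F (N + 1))) (Set.toFinite _)
      simpa [Set.ncard_univ] using this
    omega

noncomputable def rk (δ : S → Set X → Set Y → S) (F : Set S) (s : S) : ℕ :=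
  if h : ∃ n, s ∈ Wn δ F n then Nat.find h else 0

noncomputable def choice (δ : S → Set X → Set Y → S) (F : Set S) (s : S) : Set Y :=
  if h : ∃ Y', ∀ X', δ s X' Y' ∈ Wn δ F (rk δ F s - 1) then h.choose else ∅

lemma choice_spec {δ : S → Set X → Set Y → S} {F : Set S} {s : S} {n : ℕ}
    (hn : s ∈ Wn δ F n) (hF : s ∉ F) :
    ∃ m, m < n ∧ ∀ X', δ s X' (choice δ F s) ∈ Wn δ F m := by
  have hex : ∃ n, s ∈ Wn δ F n := ⟨n, hn⟩
  have hrk : rk δ F s = Nat.find hex := by simp [rk, hex]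
  have hmem : s ∈ Wn δ F (Nat.find hex) := Nat.find_spec hex
  have hpos : Nat.find hex ≠ 0 := by
    intro h0
    exact hF (by rw [h0] at hmem; exact hmem)
  obtain ⟨r, hr⟩ : ∃ r, Nat.find hex = r + 1 := ⟨Nat.find hex - 1, by omega⟩
  have hnot : s ∉ Wn δ F r := Nat.find_min hex (by omega)
  have hstep : ∃ Y', ∀ X', δ s X' Y' ∈ Wn δ F r := by
    rw [hr] at hmem
    rcases hmem with h | h
    · exact absurd h hnot
    · exact h
  have hrr : rk δ F s - 1 = r := by rw [hrk, hr]; omega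
  have hc : ∃ Y', ∀ X', δ s X' Y' ∈ Wn δ F (rk δ F s - 1) := by rw [hrr]; exact hstep
  refine ⟨r, ?_, ?_⟩
  · have : Nat.find hex ≤ n := Nat.find_le hn
    omega
  · intro X'
    rw [← hrr]
    have := hc.choose_spec X'
    simpa [choice, hc] using this

noncomputable def sim (δ : S → Set X → Set Y → S) (F : Set S) : S → List (Set X) → S
  | s, [] => s
  | s, a :: t => sim δ F (δ s a (choice δ F s)) t

noncomputable def gs (δ : S → Set X → Set Y → S) (F : Set S) (s : S)
    (l : List (Set X)) : Set Y := choice δ F (sim δ F s l)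

lemma run_shift (δ : S → Set X → Set Y → S) (F : Set S) :
    ∀ (k : ℕ) (s : S) (xs : ℕ → Set X),
      run δ (gs δ F s) s xs (k + 1) =
      run δ (gs δ F (δ s (xs 0) (choice δ F s))) (δ s (xs 0) (choice δ F s))
        (fun n => xs (n + 1)) k := by
  intro k
  induction k with
  | zero =>
    intro s xs
    show δ s (xs 0) (gs δ F s []) = _
    simp [gs, sim, run]
  | succ k ih =>
    intro s xs
    show δ (run δ (gs δ F s) s xs (k + 1)) (xs (k + 1))
        (gs δ F s (List.ofFn fun m : Fin (k + 1) => xs m)) = _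
    rw [ih s xs]
    show _ = δ (run _ _ _ _ k) (xs (k + 1))
        (gs δ F (δ s (xs 0) (choice δ F s)) (List.ofFn fun m : Fin k => xs (m + 1)))
    congr 1
    rw [List.ofFn_succ]
    simp [gs, sim]

lemma main {δ : S → Set X → Set Y → S} {F : Set S} :
    ∀ (n : ℕ) (s : S), s ∈ Wn δ F n → ∀ xs : ℕ → Set X,
      ∃ k, k ≤ n ∧ run δ (gs δ F s) s xs k ∈ F := by
  intro n
  induction n using Nat.strong_induction_on with
  | _ n ih =>
    intro s hs xs
    by_cases hF : s ∈ F
    · exact ⟨0, Nat.zero_le n, hF⟩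
    · obtain ⟨m, hm, hall⟩ := choice_spec hs hF
      obtain ⟨k, hk, hkF⟩ := ih m hm (δ s (xs 0) (choice δ F s)) (hall (xs 0))
        (fun j => xs (j + 1))
      refine ⟨k + 1, by omega, ?_⟩
      rw [run_shift]
      exact hkF

end WinAux

/-- If `s ∈ W`, then there exists a strategy `g` such that for every infinite
input sequence there exists `k` with `0 ≤ k ≤ |S|` such that the state `s'_k`
of the induced run of `g` from `s` belongs to `F`: the controller can force
acceptance within at most `|S|` steps. -/
theorem winning_state_bounded_strategy {S X Y : Type}
    [Fintype S] [Fintype X] [Fintype Y]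
    (δ : S → Set X → Set Y → S) (s₀ : S) (F : Set S) (s : S)
    (hW : Win δ F s) :
    ∃ g : List (Set X) → Set Y,
      ∀ xs : ℕ → Set X, ∃ k : ℕ, k ≤ Fintype.card S ∧ run δ g s xs k ∈ F := by
  obtain ⟨n, hn⟩ := WinAux.win_mem_Wn hW
  have hs : s ∈ WinAux.Wn δ F (Fintype.card S) := WinAux.Wn_subset_card n hn
  exact ⟨WinAux.gs δ F s, fun xs => WinAux.main (Fintype.card S) s hs xs⟩
end

section
/- For every i ≥ 0 and every state s ∈ S: s ∈ W_i if and only if there exists a strategy g such that for every infinite sequence X₀, X₁, … of subsets of X there exists k with 0 ≤ k ≤ i such that the state s'_k of the induced run of g from s belongs to F; that is, W_i is exactly the set of states from which the controller can force acceptance within at most i steps. -/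
/-- The fixpoint approximants `(T_i, W_i)`:
`T₀ = F × 2^Y`, `W₀ = F`,
`T_{i+1} = T_i ∪ {(s, Y') : s ∉ W_i and δ(s, X' ∪ Y') ∈ W_i for every X' ⊆ X}`,
`W_{i+1} = {s : (s, Y') ∈ T_{i+1} for some Y' ⊆ Y}`. -/
def TW {S X Y : Type} (δ : S → Set X → Set Y → S) (F : Set S) :
    ℕ → Set (S × Set Y) × Set S
  | 0 => ({p | p.1 ∈ F}, F)
  | i + 1 =>
      let T := (TW δ F i).1
      let W := (TW δ F i).2
      let T' := T ∪ {p | p.1 ∉ W ∧ ∀ X' : Set X, δ p.1 X' p.2 ∈ W}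
      (T', {s | ∃ Y' : Set Y, (s, Y') ∈ T'})

/-- `T_i`. -/
def Tset {S X Y : Type} (δ : S → Set X → Set Y → S) (F : Set S) (i : ℕ) :
    Set (S × Set Y) := (TW δ F i).1

/-- `W_i`. -/
def Wset {S X Y : Type} (δ : S → Set X → Set Y → S) (F : Set S) (i : ℕ) :
    Set S := (TW δ F i).2

lemma mem_Wset_iff {S X Y : Type} (δ : S → Set X → Set Y → S) (F : Set S)
    (i : ℕ) (s : S) :
    s ∈ Wset δ F i ↔ ∃ Y' : Set Y, (s, Y') ∈ Tset δ F i := by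
  cases i with
  | zero => exact ⟨fun h => ⟨∅, h⟩, fun ⟨Y', h⟩ => h⟩
  | succ i => exact Iff.rfl

lemma Tset_mono {S X Y : Type} (δ : S → Set X → Set Y → S) (F : Set S)
    (i : ℕ) : Tset δ F i ⊆ Tset δ F (i + 1) := by
  intro p hp
  exact Or.inl hp

lemma Wset_mono {S X Y : Type} (δ : S → Set X → Set Y → S) (F : Set S)
    (i : ℕ) : Wset δ F i ⊆ Wset δ F (i + 1) := by
  intro s hs
  obtain ⟨Y', hY'⟩ := (mem_Wset_iff δ F i s).mp hs
  exact (mem_Wset_iff δ F (i + 1) s).mpr ⟨Y', Tset_mono δ F i hY'⟩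

lemma F_subset_Wset {S X Y : Type} (δ : S → Set X → Set Y → S) (F : Set S)
    (i : ℕ) : F ⊆ Wset δ F i := by
  induction i with
  | zero => exact subset_rfl
  | succ i ih => exact ih.trans (Wset_mono δ F i)

lemma mem_Wset_succ_iff {S X Y : Type} (δ : S → Set X → Set Y → S) (F : Set S)
    (i : ℕ) (s : S) :
    s ∈ Wset δ F (i + 1) ↔
      s ∈ Wset δ F i ∨ ∃ Y' : Set Y, ∀ X' : Set X, δ s X' Y' ∈ Wset δ F i := by
  constructor
  · rintro ⟨Y', hT | ⟨-, h⟩⟩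
    · exact Or.inl ((mem_Wset_iff δ F i s).mpr ⟨Y', hT⟩)
    · exact Or.inr ⟨Y', h⟩
  · rintro (h | ⟨Y', h⟩)
    · obtain ⟨Y', hT⟩ := (mem_Wset_iff δ F i s).mp h
      exact ⟨Y', Or.inl hT⟩
    · by_cases hW : s ∈ Wset δ F i
      · obtain ⟨Y'', hT⟩ := (mem_Wset_iff δ F i s).mp hW
        exact ⟨Y'', Or.inl hT⟩
      · exact ⟨Y', Or.inr ⟨hW, h⟩⟩

lemma run_succ_shift {S X Y : Type} (δ : S → Set X → Set Y → S)
    (g : List (Set X) → Set Y) (s : S) (xs : ℕ → Set X) (k : ℕ) :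
    run δ g s xs (k + 1) =
      run δ (fun l => g (xs 0 :: l)) (δ s (xs 0) (g []))
        (fun n => xs (n + 1)) k := by
  induction k with
  | zero => simp [run]
  | succ k ih =>
    show δ (run δ g s xs (k + 1)) (xs (k + 1))
        (g (List.ofFn fun m : Fin (k + 1) => xs m)) = _
    rw [ih, List.ofFn_succ]
    rfl

theorem approximant_iff_bounded_winning' {S X Y : Type}
    (δ : S → Set X → Set Y → S) (F : Set S) (i : ℕ) (s : S) :
    s ∈ Wset δ F i ↔
      ∃ g : List (Set X) → Set Y,
        ∀ xs : ℕ → Set X, ∃ k : ℕ, k ≤ i ∧ run δ g s xs k ∈ F := by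
  induction i generalizing s with
  | zero =>
    constructor
    · intro hs
      exact ⟨fun _ => ∅, fun xs => ⟨0, le_refl 0, hs⟩⟩
    · rintro ⟨g, hg⟩
      obtain ⟨k, hk, hF⟩ := hg (fun _ => ∅)
      rw [Nat.le_zero] at hk
      subst hk
      exact hF
  | succ i ih =>
    rw [mem_Wset_succ_iff]
    constructor
    · rintro (hs | ⟨Y', hY'⟩)
      · obtain ⟨g, hg⟩ := (ih s).mp hs
        exact ⟨g, fun xs => by
          obtain ⟨k, hk, hF⟩ := hg xs
          exact ⟨k, hk.trans (Nat.le_succ i), hF⟩⟩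
      · have h : ∀ X' : Set X, ∃ g : List (Set X) → Set Y,
            ∀ xs : ℕ → Set X, ∃ k : ℕ, k ≤ i ∧ run δ g (δ s X' Y') xs k ∈ F :=
          fun X' => (ih (δ s X' Y')).mp (hY' X')
        choose g' hg' using h
        refine ⟨fun l => match l with | [] => Y' | X₀ :: rest => g' X₀ rest,
          fun xs => ?_⟩
        obtain ⟨k, hk, hF⟩ := hg' (xs 0) (fun n => xs (n + 1))
        refine ⟨k + 1, Nat.succ_le_succ hk, ?_⟩
        rw [run_succ_shift]
        exact hF
    · rintro ⟨g, hg⟩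
      by_cases hW : s ∈ Wset δ F i
      · exact Or.inl hW
      · refine Or.inr ⟨g [], fun X' => ?_⟩
        refine (ih (δ s X' (g []))).mpr ⟨fun l => g (X' :: l), fun xs' => ?_⟩
        obtain ⟨k, hk, hF⟩ := hg (fun n => match n with | 0 => X' | n + 1 => xs' n)
        match k with
        | 0 => exact absurd (F_subset_Wset δ F i hF) hW
        | k + 1 =>
          refine ⟨k, Nat.le_of_succ_le_succ hk, ?_⟩
          rw [run_succ_shift] at hF
          exact hF

/-- For every `i ≥ 0` and every state `s`: `s ∈ W_i` iff there exists a
strategy `g` such that for every infinite input sequence there exists `k` with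
`0 ≤ k ≤ i` such that the state `s'_k` of the induced run of `g` from `s`
belongs to `F`: `W_i` is exactly the set of states from which the controller
can force acceptance within at most `i` steps. -/
theorem approximant_iff_bounded_winning {S X Y : Type}
    [Fintype S] [Fintype X] [Fintype Y]
    (δ : S → Set X → Set Y → S) (s₀ : S) (F : Set S) (i : ℕ) (s : S) :
    s ∈ Wset δ F i ↔
      ∃ g : List (Set X) → Set Y,
        ∀ xs : ℕ → Set X, ∃ k : ℕ, k ≤ i ∧ run δ g s xs k ∈ F :=
  approximant_iff_bounded_winning' δ F i s
end

section
/- Let φ be an LTLf formula over P = X ∪ Y and let G = (2^(X∪Y), S, s₀, δ, F) be a DFA such that s₀ ∉ F and G accepts exactly those nonempty finite words over 2^(X∪Y) which, viewed as finite traces over 2^P, satisfy φ. Then φ is realizable with respect to ⟨X, Y⟩ if and only if s₀ ∈ W. -/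
/-- Syntax of LTLf formulas over atomic propositions `P`. -/
inductive LTLf (P : Type) : Type where
  | tru : LTLf P
  | fls : LTLf P
  | atom : P → LTLf P
  | neg : LTLf P → LTLf P
  | conj : LTLf P → LTLf P → LTLf P
  | next : LTLf P → LTLf P
  | until_ : LTLf P → LTLf P → LTLf P

/-- Satisfaction of an LTLf formula on a finite trace `ρ` (a list of
propositional interpretations) at position `i`. -/
def Sat {P : Type} : LTLf P → List (Set P) → ℕ → Prop
  | .tru, _, _ => True
  | .fls, _, _ => False
  | .atom a, ρ, i => a ∈ ρ.getD i ∅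
  | .neg φ, ρ, i => ¬ Sat φ ρ i
  | .conj φ ψ, ρ, i => Sat φ ρ i ∧ Sat ψ ρ i
  | .next φ, ρ, i => i + 1 < ρ.length ∧ Sat φ ρ (i + 1)
  | .until_ φ ψ, ρ, i =>
      ∃ j, i ≤ j ∧ j < ρ.length ∧ Sat ψ ρ j ∧ ∀ k, i ≤ k → k < j → Sat φ ρ k

/-- Weak next: `Xw φ := ¬ X ¬ φ`. -/
def LTLf.wnext {P : Type} (φ : LTLf P) : LTLf P := .neg (.next (.neg φ))

/-- Release: `φ₁ R φ₂ := ¬ (¬ φ₁ U ¬ φ₂)`. -/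
def LTLf.release {P : Type} (φ ψ : LTLf P) : LTLf P :=
  .neg (.until_ (.neg φ) (.neg ψ))

/-- Eventually: `F φ := ⊤ U φ`. -/
def LTLf.ev {P : Type} (φ : LTLf P) : LTLf P := .until_ .tru φ

/-- Always: `G φ := ⊥ R φ`. -/
def LTLf.alw {P : Type} (φ : LTLf P) : LTLf P := LTLf.release .fls φ

/-- The letter `X' ∪ Y' ∈ 2^(X∪Y)` determined by `X' ⊆ X` and `Y' ⊆ Y`,
where the disjoint union `X ∪ Y` is represented by the sum type `X ⊕ Y`. -/
def join {X Y : Type} (X' : Set X) (Y' : Set Y) : Set (X ⊕ Y) :=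
  {p | Sum.elim (· ∈ X') (· ∈ Y') p}

/-- The set `W` of winning states of the DFA game on the DFA
`G = (2^(X∪Y), S, s₀, δ, F)`: the least set containing `F` and containing every
state `s` for which there exists `Y' ⊆ Y` such that `δ(s, X' ∪ Y') ∈ W`
for every `X' ⊆ X`. -/
inductive WinJ {S X Y : Type} (δ : S → Set (X ⊕ Y) → S) (F : Set S) : S → Prop
  | accept : ∀ s ∈ F, WinJ δ F s
  | step : ∀ (s : S) (Y' : Set Y), (∀ X' : Set X, WinJ δ F (δ s (join X' Y'))) →
      WinJ δ F s


namespace LTLfAux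

open scoped Classical

variable {S X Y : Type}

/-- Finite approximations of the winning set. -/
def WinN (δ : S → Set (X ⊕ Y) → S) (F : Set S) : ℕ → Set S
  | 0 => F
  | n+1 => WinN δ F n ∪
      {s | ∃ Y' : Set Y, ∀ X' : Set X, δ s (join X' Y') ∈ WinN δ F n}

lemma winN_subset_succ (δ : S → Set (X ⊕ Y) → S) (F : Set S) (n : ℕ) :
    WinN δ F n ⊆ WinN δ F (n+1) := fun _ hs => Or.inl hs

lemma winN_mono (δ : S → Set (X ⊕ Y) → S) (F : Set S) {m n : ℕ} (h : m ≤ n) :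
    WinN δ F m ⊆ WinN δ F n := by
  induction h with
  | refl => exact subset_rfl
  | step _ ih => exact ih.trans (winN_subset_succ ..)

lemma winN_winJ (δ : S → Set (X ⊕ Y) → S) (F : Set S) :
    ∀ n, ∀ s, s ∈ WinN δ F n → WinJ δ F s := by
  intro n
  induction n with
  | zero => exact fun s hs => WinJ.accept s hs
  | succ n ih =>
    rintro s (hs | ⟨Y', hY'⟩)
    · exact ih s hs
    · exact WinJ.step s Y' fun X' => ih _ (hY' X')

lemma winJ_winN [Finite X] (δ : S → Set (X ⊕ Y) → S) (F : Set S) {s : S}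
    (h : WinJ δ F s) : ∃ n, s ∈ WinN δ F n := by
  induction h with
  | accept s hs => exact ⟨0, hs⟩
  | step s Y' h ih =>
    haveI := Fintype.ofFinite (Set X)
    choose f hf using ih
    refine ⟨(Finset.univ.sup f) + 1, Or.inr ⟨Y', fun X' => ?_⟩⟩
    exact winN_mono δ F (Finset.le_sup (Finset.mem_univ X')) (hf X')

lemma winN_step (δ : S → Set (X ⊕ Y) → S) (F : Set S) :
    ∀ n, ∀ s : S, s ∈ WinN δ F (n+1) → s ∉ F →
    ∃ Y' : Set Y, ∀ X' : Set X, δ s (join X' Y') ∈ WinN δ F n := by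
  intro n
  induction n with
  | zero =>
    rintro s (hs | hs) hF
    · exact absurd hs hF
    · exact hs
  | succ n ih =>
    rintro s (hs | hs) hF
    · obtain ⟨Y', hY'⟩ := ih s hs hF
      exact ⟨Y', fun X' => winN_subset_succ δ F n (hY' X')⟩
    · exact hs

/-- Rank of a state: the least level at which it becomes winning. -/
noncomputable def rank (δ : S → Set (X ⊕ Y) → S) (F : Set S) (s : S) : ℕ :=
  sInf {n | s ∈ WinN δ F n}

lemma rank_spec (δ : S → Set (X ⊕ Y) → S) (F : Set S) {s : S}
    (h : ∃ n, s ∈ WinN δ F n) : s ∈ WinN δ F (rank δ F s) :=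
  Nat.sInf_mem h

lemma rank_le (δ : S → Set (X ⊕ Y) → S) (F : Set S) {s : S} {n : ℕ}
    (h : s ∈ WinN δ F n) : rank δ F s ≤ n := Nat.sInf_le h

lemma rank_descent (δ : S → Set (X ⊕ Y) → S) (F : Set S) {s : S}
    (h : ∃ n, s ∈ WinN δ F n) (hF : s ∉ F) :
    ∃ Y' : Set Y, ∀ X' : Set X, (∃ n, δ s (join X' Y') ∈ WinN δ F n) ∧
      rank δ F (δ s (join X' Y')) < rank δ F s := by
  have hmem := rank_spec δ F h
  rcases hr : rank δ F s with _ | r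
  · rw [hr] at hmem; exact absurd hmem hF
  · rw [hr] at hmem
    obtain ⟨Y', hY'⟩ := winN_step δ F r s hmem hF
    refine ⟨Y', fun X' => ⟨⟨r, hY' X'⟩, ?_⟩⟩
    have := rank_le δ F (hY' X')
    omega

/-- The agent's winning strategy, as a function of the current state. -/
noncomputable def str (δ : S → Set (X ⊕ Y) → S) (F : Set S) (s : S) : Set Y :=
  if h : (∃ n, s ∈ WinN δ F n) ∧ s ∉ F then (rank_descent δ F h.1 h.2).choose
  else ∅

lemma str_spec (δ : S → Set (X ⊕ Y) → S) (F : Set S) {s : S}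
    (h : ∃ n, s ∈ WinN δ F n) (hF : s ∉ F) :
    ∀ X' : Set X, (∃ n, δ s (join X' (str δ F s)) ∈ WinN δ F n) ∧
      rank δ F (δ s (join X' (str δ F s))) < rank δ F s := by
  rw [str, dif_pos (⟨h, hF⟩ : (∃ n, s ∈ WinN δ F n) ∧ s ∉ F)]
  exact (rank_descent δ F h hF).choose_spec

/-- State reached from `s₀` after a (reversed) history of environment moves,
with the agent playing `str`. -/
noncomputable def runR (δ : S → Set (X ⊕ Y) → S) (F : Set S) (s₀ : S) :
    List (Set X) → S
  | [] => s₀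
  | x :: l => δ (runR δ F s₀ l) (join x (str δ F (runR δ F s₀ l)))

/-- The environment's escaping strategy. -/
noncomputable def esc (δ : S → Set (X ⊕ Y) → S) (F : Set S) (s : S)
    (Y' : Set Y) : Set X :=
  if h : ∃ X', ¬ WinJ δ F (δ s (join X' Y')) then h.choose else ∅

lemma esc_spec (δ : S → Set (X ⊕ Y) → S) (F : Set S) {s : S}
    (h : ¬ WinJ δ F s) (Y' : Set Y) :
    ¬ WinJ δ F (δ s (join (esc δ F s Y') Y')) := by
  have hx : ∃ X', ¬ WinJ δ F (δ s (join X' Y')) := by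
    by_contra hc
    push_neg at hc
    exact h (WinJ.step s Y' hc)
  rw [esc, dif_pos hx]
  exact hx.choose_spec

/-- The play against a given agent strategy `g`, with the environment escaping:
current state and history of environment moves. -/
noncomputable def play (δ : S → Set (X ⊕ Y) → S) (F : Set S) (s₀ : S)
    (g : List (Set X) → Set Y) : ℕ → S × List (Set X)
  | 0 => (s₀, [])
  | n+1 =>
      let p := play δ F s₀ g n
      let x := esc δ F p.1 (g p.2)
      (δ p.1 (join x (g p.2)), p.2 ++ [x])

lemma ofFn_succ_eq {A : Type*} (h : ℕ → A) (n : ℕ) :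
    (List.ofFn fun j : Fin (n+1) => h j) =
      (List.ofFn fun j : Fin n => h j) ++ [h n] := by
  rw [List.ofFn_succ', List.concat_eq_append]
  simp

lemma foldl_ofFn_rec {A B : Type*} (f : B → A → B) (b : B) (h : ℕ → A)
    (t : ℕ → B) (h0 : t 0 = b) (hs : ∀ n, t (n+1) = f (t n) (h n)) :
    ∀ n, List.foldl f b (List.ofFn fun j : Fin n => h j) = t n := by
  intro n
  induction n with
  | zero => simpa using h0.symm
  | succ n ih =>
    rw [ofFn_succ_eq, List.foldl_append]
    simp only [List.foldl_cons, List.foldl_nil]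
    rw [ih, hs]

end LTLfAux

/-- Let `φ` be an LTLf formula over `P = X ∪ Y` (represented as `X ⊕ Y`) and
let `G = (2^(X∪Y), S, s₀, δ, F)` be a DFA such that `s₀ ∉ F` and `G` accepts
exactly those nonempty finite words over `2^(X∪Y)` which, viewed as finite
traces, satisfy `φ`.  Then `φ` is realizable with respect to `⟨X, Y⟩` if and
only if `s₀ ∈ W`. -/


theorem ltlf_realizable_iff_initial_winning {S X Y : Type}
    [Fintype S] [Fintype X] [Fintype Y]
    (φ : LTLf (X ⊕ Y)) (δ : S → Set (X ⊕ Y) → S) (s₀ : S) (F : Set S)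
    (h₀ : s₀ ∉ F)
    (hacc : ∀ w : List (Set (X ⊕ Y)), w ≠ [] →
      (List.foldl δ s₀ w ∈ F ↔ Sat φ w 0)) :
    (∃ g : List (Set X) → Set Y, ∀ xs : ℕ → Set X, ∃ k : ℕ,
        Sat φ (List.ofFn fun j : Fin (k + 1) =>
          join (xs j) (g (List.ofFn fun m : Fin j.val => xs m))) 0) ↔
      WinJ δ F s₀ := by
    classical
  open LTLfAux in
  constructor
  · -- realizable → s₀ winning
    rintro ⟨g, hg⟩
    by_contra hW
    set P := play δ F s₀ g with hP
    set xs : ℕ → Set X := fun n => esc δ F (P n).1 (g (P n).2) with hxs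
    have hsnd : ∀ n, (P n).2 = List.ofFn fun m : Fin n => xs m := by
      intro n
      induction n with
      | zero => simp [hP, play]
      | succ n ih =>
        rw [ofFn_succ_eq, ← ih]
        rfl
    have hnw : ∀ n, ¬ WinJ δ F (P n).1 := by
      intro n
      induction n with
      | zero => exact hW
      | succ n ih => exact esc_spec δ F ih _
    have hfold : ∀ n, List.foldl δ s₀
        (List.ofFn fun j : Fin n => join (xs j) (g (P j).2)) = (P n).1 := by
      exact foldl_ofFn_rec δ s₀ (fun n => join (xs n) (g (P n).2))
        (fun n => (P n).1) rfl (fun n => rfl)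
    obtain ⟨k, hk⟩ := hg xs
    have htr : (List.ofFn fun j : Fin (k + 1) =>
        join (xs j) (g (List.ofFn fun m : Fin j.val => xs m))) =
        List.ofFn fun j : Fin (k + 1) => join (xs j) (g (P j).2) := by
      congr 1
      funext j
      rw [hsnd]
    rw [htr] at hk
    have hne : (List.ofFn fun j : Fin (k + 1) =>
        join (xs j) (g (P j).2)) ≠ [] := by
      simp [List.ofFn_eq_nil_iff]
    have := (hacc _ hne).mpr hk
    rw [hfold (k+1)] at this
    exact hnw (k+1) (WinJ.accept _ this)
  · -- s₀ winning → realizable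
    intro hW
    refine ⟨fun l => str δ F (runR δ F s₀ l.reverse), fun xs => ?_⟩
    set stt : ℕ → S := fun n =>
      runR δ F s₀ (List.ofFn fun m : Fin n => xs m).reverse with hstt
    have h0 : stt 0 = s₀ := by simp [hstt, runR]
    have hsucc : ∀ n, stt (n+1) = δ (stt n) (join (xs n) (str δ F (stt n))) := by
      intro n
      simp only [hstt]
      rw [ofFn_succ_eq]
      simp [runR]
    have claim : ∀ n, (∀ m, m ≤ n → stt m ∉ F) →
        (∃ m, stt n ∈ WinN δ F m) ∧ rank δ F (stt n) + n ≤ rank δ F s₀ := by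
      intro n
      induction n with
      | zero =>
        intro _
        rw [h0]
        exact ⟨winJ_winN δ F hW, by omega⟩
      | succ n ih =>
        intro hns
        obtain ⟨hwin, hrk⟩ := ih (fun m hm => hns m (by omega))
        have hFn : stt n ∉ F := hns n (by omega)
        obtain ⟨hwin', hlt⟩ := str_spec δ F hwin hFn (xs n)
        rw [← hsucc n] at hwin' hlt
        exact ⟨hwin', by omega⟩
    have hex : ∃ n, stt n ∈ F := by
      by_contra hc
      push_neg at hc
      have := (claim (rank δ F s₀ + 1) (fun m _ => hc m)).2
      omega
    obtain ⟨n, hn⟩ := hex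
    have hn0 : n ≠ 0 := by
      intro h
      rw [h, h0] at hn
      exact h₀ hn
    obtain ⟨k, rfl⟩ : ∃ k, n = k + 1 := ⟨n - 1, by omega⟩
    refine ⟨k, ?_⟩
    have hfold : List.foldl δ s₀
        (List.ofFn fun j : Fin (k+1) => join (xs j) (str δ F (stt j)))
        = stt (k+1) :=
      foldl_ofFn_rec δ s₀ _ stt h0 hsucc (k+1)
    have htr : (List.ofFn fun j : Fin (k + 1) =>
        join (xs j) ((fun l => str δ F (runR δ F s₀ l.reverse))
          (List.ofFn fun m : Fin j.val => xs m))) =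
        List.ofFn fun j : Fin (k + 1) => join (xs j) (str δ F (stt j)) := rfl
    rw [htr]
    have hne : (List.ofFn fun j : Fin (k + 1) =>
        join (xs j) (str δ F (stt j))) ≠ [] := by
      simp [List.ofFn_eq_nil_iff]
    exact (hacc _ hne).mp (by rw [hfold]; exact hn)
end
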